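/- arXiv:2312.01386 — 2 statements merged into one kernel-verified Lean document; each statement's English description precedes it below -/
import Mathlib

section
/- The Matérn kernel Ψ with smoothness parameter ν > 0 satisfies Ψ(0) − Ψ(x − x') ≤ A₀ ‖x − x'‖₂^{min(ν,1)} for some constant A₀ > 0 and all x, x' ∈ ℝᵈ. -/
open MeasureTheory

open Real

lemma aux_int1 {d : ℕ} (a r : ℝ) (ha : 0 < a) (hr : (d : ℝ) < r) :
    Integrable (fun ω : EuclideanSpace ℝ (Fin d) => (a + ‖ω‖ ^ 2) ^ (-r / 2)) := by
  have hm : 0 < min a 1 := lt_min ha one_pos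
  have hbase : ∀ ω : EuclideanSpace ℝ (Fin d), (0:ℝ) < a + ‖ω‖ ^ 2 := fun ω => by positivity
  have hint : Integrable (fun ω : EuclideanSpace ℝ (Fin d) => ((1:ℝ) + ‖ω‖ ^ 2) ^ (-r / 2)) := by
    apply integrable_rpow_neg_one_add_norm_sq
    rwa [finrank_euclideanSpace_fin]
  refine (hint.const_mul ((min a 1) ^ (-r / 2))).mono' ?_ (Filter.Eventually.of_forall fun ω => ?_)
  · exact ((continuous_const.add ((continuous_norm).pow 2)).rpow_const
      (fun ω => Or.inl (hbase ω).ne')).aestronglyMeasurable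
  · rw [Real.norm_eq_abs, abs_of_nonneg (rpow_nonneg (hbase ω).le _)]
    have h1 : min a 1 * (1 + ‖ω‖ ^ 2) ≤ a + ‖ω‖ ^ 2 := by
      have h2 : min a 1 ≤ a := min_le_left _ _
      have h3 : min a 1 ≤ 1 := min_le_right _ _
      nlinarith [sq_nonneg ‖ω‖]
    calc (a + ‖ω‖ ^ 2) ^ (-r / 2) ≤ (min a 1 * (1 + ‖ω‖ ^ 2)) ^ (-r / 2) := by
          apply rpow_le_rpow_of_nonpos (by positivity) h1
          have : (0:ℝ) ≤ r := le_trans (Nat.cast_nonneg d) hr.le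
          linarith
      _ = min a 1 ^ (-r / 2) * (1 + ‖ω‖ ^ 2) ^ (-r / 2) :=
          Real.mul_rpow hm.le (by positivity)

lemma aux_int2 {d : ℕ} (a r θ : ℝ) (ha : 0 < a) (hθ : 0 ≤ θ) (hr : (d : ℝ) < r - θ) :
    Integrable (fun ω : EuclideanSpace ℝ (Fin d) => ‖ω‖ ^ θ * (a + ‖ω‖ ^ 2) ^ (-r / 2)) := by
  have hbase : ∀ ω : EuclideanSpace ℝ (Fin d), (0:ℝ) < a + ‖ω‖ ^ 2 := fun ω => by positivity
  refine (aux_int1 a (r - θ) ha hr).mono' ?_ (Filter.Eventually.of_forall fun ω => ?_)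
  · apply Continuous.aestronglyMeasurable
    apply Continuous.mul
    · exact continuous_norm.rpow_const (fun ω => Or.inr hθ)
    · exact (continuous_const.add ((continuous_norm).pow 2)).rpow_const
        (fun ω => Or.inl (hbase ω).ne')
  · rw [Real.norm_eq_abs, abs_of_nonneg (by positivity)]
    have h1 : ‖ω‖ ^ θ ≤ (a + ‖ω‖ ^ 2) ^ (θ / 2) := by
      have e : ‖ω‖ ^ θ = (‖ω‖ ^ 2) ^ (θ / 2) := by
        rw [← Real.rpow_natCast ‖ω‖ 2, ← Real.rpow_mul (norm_nonneg ω)]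
        push_cast
        congr 1
        ring
      rw [e]
      exact Real.rpow_le_rpow (by positivity) (by nlinarith) (by linarith)
    calc ‖ω‖ ^ θ * (a + ‖ω‖ ^ 2) ^ (-r / 2)
        ≤ (a + ‖ω‖ ^ 2) ^ (θ / 2) * (a + ‖ω‖ ^ 2) ^ (-r / 2) := by
          apply mul_le_mul_of_nonneg_right h1 (rpow_nonneg (hbase ω).le _)
      _ = (a + ‖ω‖ ^ 2) ^ (-(r - θ) / 2) := by
          rw [← Real.rpow_add (hbase ω)]; ring_nf

lemma aux_cos (θ t : ℝ) (hθ0 : 0 < θ) (hθ1 : θ ≤ 1) : 1 - Real.cos t ≤ 2 * |t| ^ θ := by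
  rcases eq_or_ne t 0 with rfl | ht
  · simp [Real.zero_rpow hθ0.ne']
  rcases le_or_gt |t| 1 with h | h
  · have h2 : 1 - Real.cos t ≤ t ^ 2 / 2 := by
      have := Real.one_sub_sq_div_two_le_cos (x := t); linarith
    have h3 : t ^ 2 = |t| ^ ((2:ℕ):ℝ) := by
      rw [Real.rpow_natCast]; exact (sq_abs t).symm
    have h4 : |t| ^ ((2:ℕ):ℝ) ≤ |t| ^ θ := by
      apply Real.rpow_le_rpow_of_exponent_ge (abs_pos.mpr ht) h
      push_cast; linarith
    nlinarith [Real.rpow_nonneg (abs_nonneg t) θ]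
  · have h4 : (1:ℝ) ≤ |t| ^ θ := by
      have := Real.rpow_le_rpow (by norm_num : (0:ℝ) ≤ 1) h.le hθ0.le
      rwa [Real.one_rpow] at this
    have := Real.neg_one_le_cos t
    nlinarith

/-- The Matérn kernel `Ψ` with smoothness `ν`, expressed through its spectral (Fourier)
representation `Ψ(h) = (2π)^{-d/2} ∫ cos(⟪h,ω⟫) F[Ψ](ω) dω` with Matérn spectral density
`F[Ψ](ω) = C (2ν/ℓ² + ‖ω‖²)^{-(ν+d/2)}`, is Hölder continuous of order `min ν 1`:
`Ψ(0) − Ψ(x−x') ≤ A₀ ‖x−x'‖^{min ν 1}`. -/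
theorem stmt_11 (d : ℕ) (hd : 1 ≤ d) (ν ℓ C : ℝ) (hν : 0 < ν) (hℓ : 0 < ℓ) (hC : 0 < C)
    (Ψ : EuclideanSpace ℝ (Fin d) → ℝ)
    (hΨ : ∀ h : EuclideanSpace ℝ (Fin d),
      Ψ h = (2 * Real.pi) ^ (-(d : ℝ) / 2) *
        ∫ ω : EuclideanSpace ℝ (Fin d),
          Real.cos (inner ℝ h ω) * (C * (2 * ν / ℓ ^ 2 + ‖ω‖ ^ 2) ^ (-(ν + (d : ℝ) / 2)))) :
    ∃ A₀ : ℝ, 0 < A₀ ∧ ∀ x x' : EuclideanSpace ℝ (Fin d),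
      Ψ 0 - Ψ (x - x') ≤ A₀ * ‖x - x'‖ ^ (min ν 1) := by
  set θ : ℝ := min ν 1 with hθdef
  have hθ0 : 0 < θ := lt_min hν one_pos
  have hθ1 : θ ≤ 1 := min_le_right _ _
  have hθν : θ ≤ ν := min_le_left _ _
  set a : ℝ := 2 * ν / ℓ ^ 2 with hadef
  have ha : 0 < a := by positivity
  set r : ℝ := 2 * ν + d with hrdef
  have hexp : -(ν + (d : ℝ) / 2) = -r / 2 := by rw [hrdef]; ring
  set f : EuclideanSpace ℝ (Fin d) → ℝ := fun ω => C * (a + ‖ω‖ ^ 2) ^ (-r / 2) with hfdef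
  have hbase : ∀ ω : EuclideanSpace ℝ (Fin d), (0:ℝ) < a + ‖ω‖ ^ 2 := fun ω => by positivity
  have hfpos : ∀ ω, 0 ≤ f ω := fun ω => by
    simp only [hfdef]; positivity
  have hfcont : Continuous f :=
    continuous_const.mul ((continuous_const.add ((continuous_norm).pow 2)).rpow_const
      (fun ω => Or.inl (hbase ω).ne'))
  have hf : Integrable f := (aux_int1 a r ha (by simp [hrdef]; linarith)).const_mul C
  have hg : Integrable (fun ω : EuclideanSpace ℝ (Fin d) => ‖ω‖ ^ θ * f ω) := by
    have := (aux_int2 a r θ ha hθ0.le (by simp [hrdef]; linarith)).const_mul C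
    refine this.congr (Filter.Eventually.of_forall fun ω => ?_)
    simp only [hfdef]; ring
  have hcos : ∀ h : EuclideanSpace ℝ (Fin d),
      Integrable (fun ω : EuclideanSpace ℝ (Fin d) => Real.cos (inner ℝ h ω) * f ω) := by
    intro h
    refine hf.mono' ?_ (Filter.Eventually.of_forall fun ω => ?_)
    · exact ((Real.continuous_cos.comp (continuous_const.inner continuous_id)).mul
        hfcont).aestronglyMeasurable
    · rw [Real.norm_eq_abs, abs_mul]
      calc |Real.cos (inner ℝ h ω)| * |f ω| ≤ 1 * |f ω| :=
            mul_le_mul_of_nonneg_right (Real.abs_cos_le_one _) (abs_nonneg _)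
        _ = f ω := by rw [one_mul, abs_of_nonneg (hfpos ω)]
  set c : ℝ := (2 * Real.pi) ^ (-(d : ℝ) / 2) with hcdef
  have hc : 0 < c := by positivity
  have hΨ' : ∀ h : EuclideanSpace ℝ (Fin d),
      Ψ h = c * ∫ ω, Real.cos (inner ℝ h ω) * f ω := by
    intro h
    rw [hΨ h]
    congr 1
    refine integral_congr_ae (Filter.Eventually.of_forall fun ω => ?_)
    rw [hfdef]
    simp only [hexp]
  set I : ℝ := ∫ ω, ‖ω‖ ^ θ * f ω with hIdef
  have hI : 0 ≤ I := integral_nonneg fun ω => by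
    have := hfpos ω; positivity
  refine ⟨2 * c * I + 1, by positivity, fun x x' => ?_⟩
  set h : EuclideanSpace ℝ (Fin d) := x - x' with hhdef
  have hΨ0 : Ψ 0 = c * ∫ ω, f ω := by
    rw [hΨ' 0]
    congr 1
    refine integral_congr_ae (Filter.Eventually.of_forall fun ω => ?_)
    simp only [inner_zero_left, Real.cos_zero, one_mul]
  have key : (∫ ω, f ω) - (∫ ω, Real.cos (inner ℝ h ω) * f ω) ≤ 2 * ‖h‖ ^ θ * I := by
    rw [← integral_sub hf (hcos h), ← integral_const_mul]
    apply integral_mono (hf.sub (hcos h))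
    · exact (hg.const_mul _)
    intro ω
    have hptw : 1 - Real.cos (inner ℝ h ω) ≤ 2 * |(inner ℝ h ω : ℝ)| ^ θ :=
      aux_cos θ _ hθ0 hθ1
    have habs : |(inner ℝ h ω : ℝ)| ^ θ ≤ ‖h‖ ^ θ * ‖ω‖ ^ θ := by
      rw [← Real.mul_rpow (norm_nonneg h) (norm_nonneg ω)]
      exact Real.rpow_le_rpow (abs_nonneg _) (abs_real_inner_le_norm h ω) hθ0.le
    have hfw := hfpos ω
    calc f ω - Real.cos (inner ℝ h ω) * f ω = (1 - Real.cos (inner ℝ h ω)) * f ω := by ring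
      _ ≤ (2 * |(inner ℝ h ω : ℝ)| ^ θ) * f ω := mul_le_mul_of_nonneg_right hptw hfw
      _ ≤ (2 * (‖h‖ ^ θ * ‖ω‖ ^ θ)) * f ω := by
          apply mul_le_mul_of_nonneg_right _ hfw
          linarith
      _ = 2 * ‖h‖ ^ θ * (‖ω‖ ^ θ * f ω) := by ring
  have : Ψ 0 - Ψ h = c * ((∫ ω, f ω) - (∫ ω, Real.cos (inner ℝ h ω) * f ω)) := by
    rw [hΨ0, hΨ' h]; ring
  rw [this]
  have step : c * ((∫ ω, f ω) - (∫ ω, Real.cos (inner ℝ h ω) * f ω)) ≤ c * (2 * ‖h‖ ^ θ * I) :=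
    mul_le_mul_of_nonneg_left key hc.le
  have hn : 0 ≤ ‖h‖ ^ θ := Real.rpow_nonneg (norm_nonneg h) θ
  nlinarith [step]
end

section
/- Suppose that for every t ≥ 0 and all x in a domain D, |f(x) − μ_t(x)| ≤ β_t^{1/2} σ_t(x), where β_t > 0 is nondecreasing in t, and suppose x_{t+1} maximizes μ_t(x) + β_t^{1/2} σ_t(x) over D. Then for any maximizer x* of f, f(x*) − f(x_{t+1}) ≤ 2 β_t^{1/2} σ_t(x_{t+1}) for all t ≥ 0, and hence ∑_{t=1}^T (f(x*) − f(x_t)) ≤ 2 √(T β_T ∑_{t=1}^T σ_{t−1}²(x_t)). -/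
theorem stmt_17 {D : Type*} (f : D → ℝ) (μt σt : ℕ → D → ℝ) (β : ℕ → ℝ) (xs : ℕ → D)
    (xstar : D)
    (hσ : ∀ t y, 0 ≤ σt t y)
    (hβpos : ∀ t, 0 < β t) (hβmono : Monotone β)
    (herr : ∀ (t : ℕ) (y : D), |f y - μt t y| ≤ Real.sqrt (β t) * σt t y)
    (hsel : ∀ (t : ℕ) (y : D),
      μt t y + Real.sqrt (β t) * σt t y ≤ μt t (xs (t+1)) + Real.sqrt (β t) * σt t (xs (t+1)))
    (hstar : ∀ y, f y ≤ f xstar) :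
    (∀ t : ℕ, f xstar - f (xs (t+1)) ≤ 2 * Real.sqrt (β t) * σt t (xs (t+1))) ∧
    (∀ T : ℕ, 1 ≤ T →
      ∑ t ∈ Finset.Icc 1 T, (f xstar - f (xs t))
        ≤ 2 * Real.sqrt (T * β T * ∑ t ∈ Finset.Icc 1 T, (σt (t-1) (xs t)) ^ 2)) := by
  have claim1 : ∀ t : ℕ, f xstar - f (xs (t+1)) ≤ 2 * Real.sqrt (β t) * σt t (xs (t+1)) := by
    intro t
    have h1 := abs_le.mp (herr t xstar)
    have h2 := abs_le.mp (herr t (xs (t+1)))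
    have h3 := hsel t xstar
    linarith
  refine ⟨claim1, fun T hT => ?_⟩
  have hsum1 : ∑ t ∈ Finset.Icc 1 T, (f xstar - f (xs t))
      ≤ ∑ t ∈ Finset.Icc 1 T, 2 * Real.sqrt (β T) * σt (t-1) (xs t) := by
    apply Finset.sum_le_sum
    intro t ht
    obtain ⟨h1, h2⟩ := Finset.mem_Icc.mp ht
    have hc := claim1 (t-1)
    rw [Nat.sub_add_cancel h1] at hc
    have hβ : Real.sqrt (β (t-1)) ≤ Real.sqrt (β T) :=
      Real.sqrt_le_sqrt (hβmono ((Nat.sub_le t 1).trans h2))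
    have := hσ (t-1) (xs t)
    nlinarith
  have hCS : ∑ t ∈ Finset.Icc 1 T, σt (t-1) (xs t)
      ≤ Real.sqrt (T * ∑ t ∈ Finset.Icc 1 T, (σt (t-1) (xs t)) ^ 2) := by
    have hsq := sq_sum_le_card_mul_sum_sq (s := Finset.Icc 1 T) (f := fun t => σt (t-1) (xs t))
    have hcard : (Finset.Icc 1 T).card = T := by
      rw [Nat.card_Icc]; omega
    rw [hcard] at hsq
    have hnn : 0 ≤ ∑ t ∈ Finset.Icc 1 T, σt (t-1) (xs t) :=
      Finset.sum_nonneg fun t _ => hσ _ _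
    calc ∑ t ∈ Finset.Icc 1 T, σt (t-1) (xs t)
        = Real.sqrt ((∑ t ∈ Finset.Icc 1 T, σt (t-1) (xs t)) ^ 2) :=
          (Real.sqrt_sq hnn).symm
      _ ≤ Real.sqrt (T * ∑ t ∈ Finset.Icc 1 T, (σt (t-1) (xs t)) ^ 2) :=
          Real.sqrt_le_sqrt (by exact_mod_cast hsq)
  calc ∑ t ∈ Finset.Icc 1 T, (f xstar - f (xs t))
      ≤ ∑ t ∈ Finset.Icc 1 T, 2 * Real.sqrt (β T) * σt (t-1) (xs t) := hsum1
    _ = 2 * Real.sqrt (β T) * ∑ t ∈ Finset.Icc 1 T, σt (t-1) (xs t) := by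
        rw [Finset.mul_sum]
    _ ≤ 2 * Real.sqrt (β T) * Real.sqrt (T * ∑ t ∈ Finset.Icc 1 T, (σt (t-1) (xs t)) ^ 2) := by
        apply mul_le_mul_of_nonneg_left hCS
        positivity
    _ = 2 * Real.sqrt (T * β T * ∑ t ∈ Finset.Icc 1 T, (σt (t-1) (xs t)) ^ 2) := by
        rw [mul_assoc 2, ← Real.sqrt_mul (hβpos T).le]
        ring_nf
end
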